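/- In the elementary abelian setting with m ≥ 2, Σ_{k=0}^{p^n − 1}(Γ_k(m) − 2m + 1) = (2m − 1)(g_F − 1), where Γ_k(m) and g_F are as defined. Hence the proposed set of m-differentials x^ν y^k g_k(x)^{-1} (dx)^{⊗m} with 0 ≤ ν ≤ Γ_k(m) − 2m has the right cardinality to be a basis of Ω_F(m). -/

import Mathlib

/-- As `k` ranges over `[0, q)`, the residues `(a - k*b) % q` for `b` coprime to `q`
permute `[0, q)`. -/
lemma emod_sum_perm (q : ℕ) (hq : 0 < q) (a b : ℤ) (hb : IsCoprime ((q : ℤ)) b) :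
    ∑ k ∈ Finset.range q, (a - (k : ℤ) * b) % (q : ℤ) = ∑ j ∈ Finset.range q, (j : ℤ) := by
  have hq' : (0 : ℤ) < (q : ℤ) := by exact_mod_cast hq
  set f : ℕ → ℕ := fun k => ((a - (k : ℤ) * b) % (q : ℤ)).toNat with hf
  have hnonneg : ∀ k : ℕ, 0 ≤ (a - (k : ℤ) * b) % (q : ℤ) := fun k =>
    Int.emod_nonneg _ (ne_of_gt hq')
  have hlt : ∀ k : ℕ, (a - (k : ℤ) * b) % (q : ℤ) < q := fun k => Int.emod_lt_of_pos _ hq'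
  have hinj : Set.InjOn f (Finset.range q) := by
    intro k hk k' hk' hkk'
    simp only [Finset.coe_range, Set.mem_Iio] at hk hk'
    have h1 : (a - (k : ℤ) * b) % (q : ℤ) = (a - (k' : ℤ) * b) % (q : ℤ) := by
      have := congrArg (fun x : ℕ => (x : ℤ)) hkk'
      simpa [hf, Int.toNat_of_nonneg (hnonneg k), Int.toNat_of_nonneg (hnonneg k')] using this
    have hdvd : (q : ℤ) ∣ ((k : ℤ) - (k' : ℤ)) * b := by
      have : (q : ℤ) ∣ (a - (k' : ℤ) * b) - (a - (k : ℤ) * b) :=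
        Int.ModEq.dvd h1
      have h2 : (a - (k' : ℤ) * b) - (a - (k : ℤ) * b) = ((k : ℤ) - (k' : ℤ)) * b := by ring
      rwa [h2] at this
    have hdvd' : (q : ℤ) ∣ ((k : ℤ) - (k' : ℤ)) := hb.dvd_of_dvd_mul_right hdvd
    have habs : |(k : ℤ) - (k' : ℤ)| < (q : ℤ) := by
      rw [abs_sub_lt_iff]
      constructor <;> push_cast <;> omega
    have : (k : ℤ) - (k' : ℤ) = 0 := by
      by_contra hne
      have hq2 : (q : ℤ) ≤ |(k : ℤ) - (k' : ℤ)| :=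
        Int.le_of_dvd (abs_pos.mpr hne) ((dvd_abs _ _).mpr hdvd')
      exact absurd habs (not_lt.mpr hq2)
    omega
  have himg : Finset.image f (Finset.range q) = Finset.range q := by
    apply Finset.eq_of_subset_of_card_le
    · intro x hx
      simp only [Finset.mem_image] at hx
      obtain ⟨k, _, rfl⟩ := hx
      simp only [hf, Finset.mem_range]
      have := hlt k; have := hnonneg k
      omega
    · rw [Finset.card_image_of_injOn hinj]
  calc ∑ k ∈ Finset.range q, (a - (k : ℤ) * b) % (q : ℤ)
      = ∑ k ∈ Finset.range q, ((f k : ℕ) : ℤ) := by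
        refine Finset.sum_congr rfl fun k _ => ?_
        simp [hf, Int.toNat_of_nonneg (hnonneg k)]
    _ = ∑ j ∈ Finset.image f (Finset.range q), (j : ℤ) :=
        (Finset.sum_image (fun x hx y hy h => hinj hx hy h)).symm
    _ = ∑ j ∈ Finset.range q, (j : ℤ) := by rw [himg]

/-- Closed form for the sum of floors. -/
lemma floor_sum (q : ℕ) (hq : 0 < q) (a b : ℤ) (hb : IsCoprime ((q : ℤ)) b) :
    ∑ k ∈ Finset.range q, (⌊((a - (k : ℤ) * b : ℤ) : ℚ) / (q : ℚ)⌋ : ℚ)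
      = (a : ℚ) - ((b : ℚ) + 1) * ((q : ℚ) - 1) / 2 := by
  have hq' : (0 : ℚ) < (q : ℚ) := by exact_mod_cast hq
  have step : ∀ k : ℕ, (⌊((a - (k : ℤ) * b : ℤ) : ℚ) / (q : ℚ)⌋ : ℚ)
      = (((a - (k : ℤ) * b) : ℤ) : ℚ) / q - (((a - (k : ℤ) * b) % (q : ℤ) : ℤ) : ℚ) / q := by
    intro k
    rw [Rat.floor_intCast_div_natCast]
    set x : ℤ := a - (k : ℤ) * b with hx
    have hdm : (q : ℤ) * (x / q) + x % q = x := Int.mul_ediv_add_emod x q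
    have : ((x / (q : ℤ) : ℤ) : ℚ) * q = (x : ℚ) - ((x % (q : ℤ) : ℤ) : ℚ) := by
      have := congrArg (fun y : ℤ => (y : ℚ)) hdm
      push_cast at this ⊢
      linarith
    field_simp
    linarith
  rw [Finset.sum_congr rfl fun k _ => step k, Finset.sum_sub_distrib]
  have hgauss : ∑ k ∈ Finset.range q, ((k : ℚ)) = (q : ℚ) * ((q : ℚ) - 1) / 2 := by
    have h := congrArg (fun x : ℕ => (x : ℚ)) (Finset.sum_range_id_mul_two q)
    simp only [Nat.cast_mul, Nat.cast_sub hq, Nat.cast_sum, Nat.cast_ofNat, Nat.cast_one] at h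
    linarith
  have h1 : ∑ k ∈ Finset.range q, (((a - (k : ℤ) * b) : ℤ) : ℚ) / q
      = (a : ℚ) - (b : ℚ) * (((q : ℚ) - 1) / 2) := by
    rw [← Finset.sum_div]
    have : ∑ k ∈ Finset.range q, (((a - (k : ℤ) * b) : ℤ) : ℚ)
        = (q : ℚ) * a - (b : ℚ) * ((q : ℚ) * ((q : ℚ) - 1) / 2) := by
      push_cast
      rw [Finset.sum_sub_distrib, Finset.sum_const, Finset.card_range]
      rw [← Finset.sum_mul, hgauss]
      ring
    rw [this]
    field_simp
  have h2 : ∑ k ∈ Finset.range q, (((a - (k : ℤ) * b) % (q : ℤ) : ℤ) : ℚ) / q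
      = ((q : ℚ) - 1) / 2 := by
    rw [← Finset.sum_div]
    have := emod_sum_perm q hq a b hb
    have hcast : ∑ k ∈ Finset.range q, (((a - (k : ℤ) * b) % (q : ℤ) : ℤ) : ℚ)
        = ∑ j ∈ Finset.range q, (j : ℚ) := by
      have := congrArg (fun y : ℤ => (y : ℚ)) this
      push_cast at this
      convert this using 2 <;> push_cast <;> ring
    rw [hcast, hgauss]
    field_simp
  rw [h1, h2]
  ring

theorem boseck_basis_cardinality
    (p n r m : ℕ) (hp : p.Prime) (hn : 1 ≤ n) (hr : 1 ≤ r) (hm : 2 ≤ m)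
    (Φ : Fin r → ℕ) (hΦpos : ∀ i, 1 ≤ Φ i) (hΦcop : ∀ i, Nat.Coprime (Φ i) p)
    (gF : ℚ)
    (hgF : gF = (((p : ℚ) ^ n - 1) / 2) * (-2 + ∑ i, ((Φ i : ℚ) + 1))) :
    ∑ k ∈ Finset.range (p ^ n),
        ((∑ i, (⌊(((m : ℤ) * ((p : ℤ) ^ n - 1) * ((Φ i : ℤ) + 1) - (k : ℤ) * (Φ i : ℤ)
            : ℤ) : ℚ) / (p : ℚ) ^ n⌋ : ℚ)) - 2 * (m : ℚ) + 1)
      = (2 * (m : ℚ) - 1) * (gF - 1) := by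
  set q : ℕ := p ^ n with hqdef
  have hqpos : 0 < q := Nat.pow_pos hp.pos
  have hcop : ∀ i, IsCoprime ((q : ℤ)) ((Φ i : ℤ)) := by
    intro i
    have h1 : Nat.Coprime (p ^ n) (Φ i) := (Nat.Coprime.pow_left n (hΦcop i).symm)
    exact Nat.isCoprime_iff_coprime.mpr h1
  have hqcast : ((q : ℕ) : ℚ) = (p : ℚ) ^ n := by push_cast [hqdef]; ring
  have hqcastZ : ((q : ℕ) : ℤ) = (p : ℤ) ^ n := by push_cast [hqdef]; ring
  have key : ∀ i : Fin r,
      ∑ k ∈ Finset.range q, (⌊(((m : ℤ) * ((p : ℤ) ^ n - 1) * ((Φ i : ℤ) + 1)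
          - (k : ℤ) * (Φ i : ℤ) : ℤ) : ℚ) / (p : ℚ) ^ n⌋ : ℚ)
        = ((m : ℚ) * ((p : ℚ) ^ n - 1) * ((Φ i : ℚ) + 1))
          - ((Φ i : ℚ) + 1) * ((p : ℚ) ^ n - 1) / 2 := by
    intro i
    have := floor_sum q hqpos ((m : ℤ) * ((p : ℤ) ^ n - 1) * ((Φ i : ℤ) + 1)) ((Φ i : ℤ))
      (hcop i)
    rw [hqcast] at this
    rw [this]
    push_cast
    ring
  rw [Finset.sum_add_distrib, Finset.sum_sub_distrib, Finset.sum_comm]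
  rw [Finset.sum_congr rfl fun i _ => key i]
  rw [Finset.sum_const, Finset.card_range, Finset.sum_const, Finset.card_range]
  have hsplit : ∑ i : Fin r, (((m : ℚ) * ((p : ℚ) ^ n - 1) * ((Φ i : ℚ) + 1))
      - ((Φ i : ℚ) + 1) * ((p : ℚ) ^ n - 1) / 2)
      = ((m : ℚ) * ((p : ℚ) ^ n - 1) - ((p : ℚ) ^ n - 1) / 2) * ∑ i, ((Φ i : ℚ) + 1) := by
    rw [Finset.mul_sum]
    refine Finset.sum_congr rfl fun i _ => ?_
    ring
  simp only [nsmul_eq_mul] at *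
  rw [hsplit, hgF, hqcast]
  ring
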